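/- Let k be a field with separable closure k̄ and Γ = Gal(k̄/k). Let X, Y be smooth geometrically integral k-varieties with k̄[X]^× = k̄^× = k̄[Y]^×. If the pullback Γ-morphism ψ : Pic(X̄) ⊕ Pic(Ȳ) → Pic(X̄ ×_{k̄} Ȳ) is an isomorphism, then the elementary obstruction e(X ×_k Y) ∈ Ext²_Γ(Pic(X̄ ×_{k̄} Ȳ), k̄^×) vanishes if and only if both e(X) and e(Y) vanish. -/

import Mathlib

section TwoExtPrelude

variable (G : Type) [Group G]

/-- A Yoneda 2-extension `0 → N → B₁ → B₂ → C → 0` of `G`-modules. -/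
structure TwoExt (N C : Type) [AddCommGroup N] [DistribMulAction G N]
    [AddCommGroup C] [DistribMulAction G C] where
  B₁ : Type
  B₂ : Type
  [ab₁ : AddCommGroup B₁]
  [act₁ : DistribMulAction G B₁]
  [ab₂ : AddCommGroup B₂]
  [act₂ : DistribMulAction G B₂]
  ι : N →+ B₁
  d : B₁ →+ B₂
  p : B₂ →+ C
  equiv_ι : ∀ (g : G) (x : N), ι (g • x) = g • ι x
  equiv_d : ∀ (g : G) (x : B₁), d (g • x) = g • d x
  equiv_p : ∀ (g : G) (x : B₂), p (g • x) = g • p x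
  inj : Function.Injective ι
  surj : Function.Surjective p
  ex₁ : Function.Exact ι d
  ex₂ : Function.Exact d p

attribute [instance] TwoExt.ab₁ TwoExt.act₁ TwoExt.ab₂ TwoExt.act₂

variable {G}
variable {N C : Type} [AddCommGroup N] [DistribMulAction G N]
  [AddCommGroup C] [DistribMulAction G C]

/-- A morphism of 2-extensions inducing the identity on `N` and on `C`. -/
structure TwoExtHom (E F : TwoExt G N C) where
  f₁ : E.B₁ →+ F.B₁
  f₂ : E.B₂ →+ F.B₂
  equiv₁ : ∀ (g : G) (x : E.B₁), f₁ (g • x) = g • f₁ x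
  equiv₂ : ∀ (g : G) (x : E.B₂), f₂ (g • x) = g • f₂ x
  comm_ι : ∀ n : N, f₁ (E.ι n) = F.ι n
  comm_d : ∀ x : E.B₁, f₂ (E.d x) = F.d (f₁ x)
  comm_p : ∀ y : E.B₂, F.p (f₂ y) = E.p y

/-- The elementary relation generating Yoneda equivalence of 2-extensions. -/
def TwoExtRel (E F : TwoExt G N C) : Prop := Nonempty (TwoExtHom E F)

/-- Yoneda equivalence of 2-extensions: the equivalence relation generated by the
existence of a morphism of 2-extensions fixing the ends. -/
def YEquiv (E F : TwoExt G N C) : Prop := Relation.EqvGen TwoExtRel E F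

variable (G N C)

/-- `Ext²_G(C, N)` as the set of Yoneda equivalence classes of 2-extensions. -/
def Ext2 : Type 1 :=
  Quotient (Relation.EqvGen.setoid (@TwoExtRel G _ N C _ _ _ _))

/-- The trivial 2-extension `0 → N → N → C → C → 0` (with zero middle map),
representing the zero class of `Ext²_G(C, N)`. -/
def TwoExt.triv : TwoExt G N C where
  B₁ := N
  B₂ := C
  ι := AddMonoidHom.id N
  d := 0
  p := AddMonoidHom.id C
  equiv_ι := fun _ _ => rfl
  equiv_d := fun g x => by simp
  equiv_p := fun _ _ => rfl
  inj := fun _ _ h => h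
  surj := fun c => ⟨c, rfl⟩
  ex₁ := fun y => by simp
  ex₂ := fun y => by
    constructor
    · rintro rfl; exact ⟨0, rfl⟩
    · rintro ⟨x, rfl⟩; rfl

variable {G N C}

/-- The class of a 2-extension `E` in `Ext²` is zero. -/
def TwoExt.IsZeroClass (E : TwoExt G N C) : Prop := YEquiv E (TwoExt.triv G N C)

/-- Restriction of a 2-extension of `G`-modules to a subgroup `H ≤ G`. -/
def TwoExt.res (H : Subgroup G) (E : TwoExt G N C) : TwoExt (H : Subgroup G) N C where
  B₁ := E.B₁
  B₂ := E.B₂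
  ι := E.ι
  d := E.d
  p := E.p
  equiv_ι := fun h x => E.equiv_ι (h : G) x
  equiv_d := fun h x => E.equiv_d (h : G) x
  equiv_p := fun h x => E.equiv_p (h : G) x
  inj := E.inj
  surj := E.surj
  ex₁ := E.ex₁
  ex₂ := E.ex₂

section Pullback

variable {M : Type} [AddCommGroup M] [DistribMulAction G M]

/-- The middle fibre product `B₂ ×_C M` used to pull a 2-extension back along `f : M → C`. -/
def pbCarrier (E : TwoExt G N C) (f : M →+ C) : AddSubgroup (E.B₂ × M) where
  carrier := {x | E.p x.1 = f x.2}
  add_mem' := by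
    intro a b ha hb
    simp only [Set.mem_setOf_eq, Prod.fst_add, Prod.snd_add, map_add] at *
    rw [ha, hb]
  zero_mem' := by simp
  neg_mem' := by
    intro a ha
    simp only [Set.mem_setOf_eq, Prod.fst_neg, Prod.snd_neg, map_neg] at *
    rw [ha]

/-- The `G`-action on the fibre product `B₂ ×_C M`. -/
def pbAction (E : TwoExt G N C) (f : M →+ C) (hf : ∀ (g : G) (m : M), f (g • m) = g • f m) :
    DistribMulAction G ↥(pbCarrier E f) where
  smul g x := ⟨g • (x : E.B₂ × M), by
    have hx : E.p (x : E.B₂ × M).1 = f (x : E.B₂ × M).2 := x.2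
    show E.p (g • (x : E.B₂ × M)).1 = f (g • (x : E.B₂ × M)).2
    rw [Prod.smul_fst, Prod.smul_snd, E.equiv_p, hf, hx]⟩
  one_smul x := by apply Subtype.ext; exact one_smul G _
  mul_smul a b x := by apply Subtype.ext; exact mul_smul a b _
  smul_zero g := by apply Subtype.ext; exact smul_zero g
  smul_add g x y := by apply Subtype.ext; exact smul_add g (x : E.B₂ × M) (y : E.B₂ × M)

/-- Pullback of a 2-extension along a `G`-morphism `f : M → C`. -/
def TwoExt.pullback (E : TwoExt G N C) (f : M →+ C)
    (hf : ∀ (g : G) (m : M), f (g • m) = g • f m) : TwoExt G N M :=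
  letI := pbAction E f hf
  {
  B₁ := E.B₁
  B₂ := ↥(pbCarrier E f)
  act₂ := pbAction E f hf
  ι := E.ι
  d := { toFun := fun x => ⟨(E.d x, 0), by
          show E.p (E.d x) = f 0
          rw [map_zero]
          exact (E.ex₂ (E.d x)).mpr ⟨x, rfl⟩⟩
         map_zero' := by apply Subtype.ext; simp
         map_add' := fun x y => by apply Subtype.ext; simp }
  p := (AddMonoidHom.snd E.B₂ M).comp (pbCarrier E f).subtype
  equiv_ι := E.equiv_ι
  equiv_d := by
    intro g x
    apply Subtype.ext
    show (E.d (g • x), (0 : M)) = g • (E.d x, (0 : M))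
    rw [E.equiv_d, Prod.smul_mk, smul_zero]
  equiv_p := by
    intro g x
    show ((g • x : ↥(pbCarrier E f)) : E.B₂ × M).2 = g • (x : E.B₂ × M).2
    rfl
  inj := E.inj
  surj := by
    intro m
    obtain ⟨b, hb⟩ := E.surj (f m)
    exact ⟨⟨(b, m), hb⟩, rfl⟩
  ex₁ := by
    intro y
    constructor
    · intro hy
      have : E.d y = 0 := congrArg Prod.fst (congrArg Subtype.val hy)
      exact (E.ex₁ y).mp this
    · rintro ⟨n, rfl⟩
      apply Subtype.ext
      have : E.d (E.ι n) = 0 := (E.ex₁ (E.ι n)).mpr ⟨n, rfl⟩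
      show (E.d (E.ι n), (0:M)) = (0 : E.B₂ × M)
      rw [this]; rfl
  ex₂ := by
    intro y
    constructor
    · intro hy
      have h2 : (y : E.B₂ × M).2 = 0 := hy
      have h1 : E.p (y : E.B₂ × M).1 = 0 := by
        have hmem : E.p (y : E.B₂ × M).1 = f (y : E.B₂ × M).2 := y.2
        rw [h2, map_zero] at hmem
        exact hmem
      obtain ⟨x, hx⟩ := (E.ex₂ _).mp h1
      refine ⟨x, ?_⟩
      apply Subtype.ext
      show (E.d x, (0:M)) = (y : E.B₂ × M)
      rw [hx, ← h2]
    · rintro ⟨x, rfl⟩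
      rfl
  }

end Pullback

end TwoExtPrelude

section AuxMachinery

variable {G : Type} [Group G]
variable {K : Type} [AddCommGroup K] [DistribMulAction G K]

/-- Functoriality of a construction on 2-extensions along Yoneda equivalence. -/
theorem YEquiv.mapFn {C C' : Type} [AddCommGroup C] [DistribMulAction G C]
    [AddCommGroup C'] [DistribMulAction G C']
    (Φ : TwoExt G K C → TwoExt G K C')
    (hΦ : ∀ a b, TwoExtRel a b → TwoExtRel (Φ a) (Φ b))
    {a b : TwoExt G K C} (h : YEquiv a b) : YEquiv (Φ a) (Φ b) := by
  induction h with
  | rel x y hxy => exact Relation.EqvGen.rel _ _ (hΦ x y hxy)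
  | refl x => exact Relation.EqvGen.refl _
  | symm x y _ ih => exact Relation.EqvGen.symm _ _ ih
  | trans x y z _ _ ih1 ih2 => exact Relation.EqvGen.trans _ _ _ ih1 ih2

/-- Quotient `G`-action on `A ⧸ W` for a `G`-stable subgroup `W`. -/
def quotAction {A : Type} [AddCommGroup A] [DistribMulAction G A] (W : AddSubgroup A)
    (hW : ∀ (g : G), ∀ a ∈ W, g • a ∈ W) : DistribMulAction G (A ⧸ W) where
  smul g := QuotientAddGroup.map W W (DistribMulAction.toAddMonoidHom A g)
    (fun a ha => hW g a ha)
  one_smul x := QuotientAddGroup.induction_on x (fun a => by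
    show QuotientAddGroup.map W W _ _ (QuotientAddGroup.mk a) = _
    erw [QuotientAddGroup.map_mk]
    show QuotientAddGroup.mk ((1 : G) • a) = _
    rw [one_smul])
  mul_smul g h x := QuotientAddGroup.induction_on x (fun a => by
    show QuotientAddGroup.map W W _ _ (QuotientAddGroup.mk a)
      = QuotientAddGroup.map W W _ _ (QuotientAddGroup.map W W _ _ (QuotientAddGroup.mk a))
    erw [QuotientAddGroup.map_mk, QuotientAddGroup.map_mk]
    show QuotientAddGroup.mk ((g * h) • a) = QuotientAddGroup.mk (g • h • a)
    rw [mul_smul])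
  smul_zero g := map_zero _
  smul_add g x y := map_add _ x y

theorem quotAction_mk {A : Type} [AddCommGroup A] [DistribMulAction G A] (W : AddSubgroup A)
    (hW : ∀ (g : G), ∀ a ∈ W, g • a ∈ W) (g : G) (a : A) :
    (letI := quotAction W hW
     g • (QuotientAddGroup.mk a : A ⧸ W)) = QuotientAddGroup.mk (g • a) := by
  letI := quotAction W hW
  show QuotientAddGroup.map W W _ _ (QuotientAddGroup.mk a) = _
  erw [QuotientAddGroup.map_mk]
  rfl

section Prod

variable {CX CY C : Type} [AddCommGroup CX] [DistribMulAction G CX]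
  [AddCommGroup CY] [DistribMulAction G CY] [AddCommGroup C] [DistribMulAction G C]

/-- The subgroup by which we quotient in the pushout of `E ⊕ F` along addition `K × K → K`. -/
def prodW (E : TwoExt G K CX) (F : TwoExt G K CY) :
    AddSubgroup (K × E.B₁ × F.B₁) :=
  AddMonoidHom.range
    { toFun := fun nm : K × K => ((nm.1 + nm.2 : K), (-E.ι nm.1, -F.ι nm.2))
      map_zero' := by simp
      map_add' := fun a b => by
        simp only [Prod.fst_add, Prod.snd_add, map_add, Prod.mk_add_mk, neg_add,
          Prod.mk.injEq]
        first
        | trivial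
        | exact ⟨by abel, trivial⟩
        | exact ⟨by abel, rfl, rfl⟩
        | exact ⟨by abel, rfl⟩ }

theorem prodW_stable (E : TwoExt G K CX) (F : TwoExt G K CY) :
    ∀ (g : G), ∀ a ∈ prodW E F, g • a ∈ prodW E F := by
  rintro g a ⟨⟨n, m⟩, rfl⟩
  refine ⟨(g • n, g • m), ?_⟩
  show ((g • n + g • m : K), (-E.ι (g • n), -F.ι (g • m)))
      = g • ((n + m : K), (-E.ι n, -F.ι m))
  rw [E.equiv_ι, F.equiv_ι, Prod.smul_mk, Prod.smul_mk, smul_add, smul_neg, smul_neg]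

/-- The product 2-extension: pushout of `E ⊕ F` along `+ : K × K → K`, with `C`-side
transported along `ψ`. -/
def prodExt (ψ : CX × CY →+ C) (hψ : ∀ (g : G) (v : CX × CY), ψ (g • v) = g • ψ v)
    (hinj : Function.Injective ψ) (hsurj : Function.Surjective ψ)
    (E : TwoExt G K CX) (F : TwoExt G K CY) : TwoExt G K C :=
  letI := quotAction (prodW E F) (prodW_stable E F)
  { B₁ := (K × E.B₁ × F.B₁) ⧸ prodW E F
    B₂ := E.B₂ × F.B₂
    act₁ := quotAction (prodW E F) (prodW_stable E F)
    ι := (QuotientAddGroup.mk' (prodW E F)).comp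
      { toFun := fun a : K => ((a : K), ((0 : E.B₁), (0 : F.B₁)))
        map_zero' := rfl
        map_add' := fun a b => by simp [Prod.mk_add_mk] }
    d := QuotientAddGroup.lift (prodW E F)
      { toFun := fun v : K × E.B₁ × F.B₁ => (E.d v.2.1, F.d v.2.2)
        map_zero' := by simp
        map_add' := fun a b => by simp [Prod.mk_add_mk] }
      (by
        rintro a ⟨⟨n, m⟩, rfl⟩
        show (E.d (-E.ι n), F.d (-F.ι m)) = 0
        have h1 : E.d (E.ι n) = 0 := (E.ex₁ _).mpr ⟨n, rfl⟩
        have h2 : F.d (F.ι m) = 0 := (F.ex₁ _).mpr ⟨m, rfl⟩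
        rw [map_neg, map_neg, h1, h2, neg_zero, neg_zero]
        rfl)
    p := ψ.comp (AddMonoidHom.prodMap E.p F.p)
    equiv_ι := fun g a => by
      show QuotientAddGroup.mk _ = g • QuotientAddGroup.mk _
      rw [quotAction_mk]
      show QuotientAddGroup.mk ((g • a : K), ((0:E.B₁), (0:F.B₁)))
        = QuotientAddGroup.mk (g • ((a : K), ((0:E.B₁), (0:F.B₁))))
      rw [Prod.smul_mk, Prod.smul_mk, smul_zero, smul_zero]
    equiv_d := fun g x => QuotientAddGroup.induction_on x (fun v => by
      rw [quotAction_mk]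
      show (E.d (g • v).2.1, F.d (g • v).2.2) = g • (E.d v.2.1, F.d v.2.2)
      rw [Prod.smul_snd, Prod.smul_fst, Prod.smul_snd, E.equiv_d, F.equiv_d, Prod.smul_mk])
    equiv_p := fun g x => by
      show ψ (E.p (g • x).1, F.p (g • x).2) = g • ψ (E.p x.1, F.p x.2)
      rw [Prod.smul_fst, Prod.smul_snd, E.equiv_p, F.equiv_p, ← Prod.smul_mk, hψ]
    inj := by
      intro a b h
      have h'' : (QuotientAddGroup.mk ((a : K), ((0:E.B₁), (0:F.B₁)))
          : (K × E.B₁ × F.B₁) ⧸ prodW E F)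
          = QuotientAddGroup.mk ((b : K), ((0:E.B₁), (0:F.B₁))) := h
      have h' := (QuotientAddGroup.eq_iff_sub_mem).mp h''
      obtain ⟨⟨n, m⟩, hnm⟩ := h'
      have h1 : -E.ι n = (0:E.B₁) - 0 := congrArg (fun x => x.2.1) hnm
      have h2 : -F.ι m = (0:F.B₁) - 0 := congrArg (fun x => x.2.2) hnm
      rw [sub_zero] at h1 h2
      have hn : n = 0 := E.inj (show E.ι n = E.ι 0 by
        rw [map_zero]; exact neg_eq_zero.mp h1)
      have hm : m = 0 := F.inj (show F.ι m = F.ι 0 by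
        rw [map_zero]; exact neg_eq_zero.mp h2)
      have h0 : n + m = a - b := congrArg (fun x => x.1) hnm
      rw [hn, hm, add_zero] at h0
      exact sub_eq_zero.mp h0.symm
    surj := by
      intro c
      obtain ⟨⟨cx, cy⟩, hc⟩ := hsurj c
      obtain ⟨u, hu⟩ := E.surj cx
      obtain ⟨v, hv⟩ := F.surj cy
      exact ⟨(u, v), by show ψ (E.p u, F.p v) = c; rw [hu, hv, hc]⟩
    ex₁ := by
      intro y
      refine QuotientAddGroup.induction_on y (fun v => ?_)
      obtain ⟨v1, v2, v3⟩ := v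
      constructor
      · intro hv
        have hx : E.d v2 = 0 := congrArg Prod.fst hv
        have hy : F.d v3 = 0 := congrArg Prod.snd hv
        obtain ⟨n, hn⟩ := (E.ex₁ _).mp hx
        obtain ⟨m, hm⟩ := (F.ex₁ _).mp hy
        refine ⟨v1 + n + m, ?_⟩
        show QuotientAddGroup.mk _ = QuotientAddGroup.mk (v1, (v2, v3))
        rw [QuotientAddGroup.eq_iff_sub_mem]
        refine ⟨(n, m), ?_⟩
        show ((n + m : K), (-E.ι n, -F.ι m))
          = ((v1 + n + m : K), ((0:E.B₁), (0:F.B₁))) - (v1, (v2, v3))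
        rw [← hn, ← hm, Prod.mk_sub_mk, Prod.mk_sub_mk, Prod.mk.injEq, Prod.mk.injEq]
        exact ⟨by abel, by rw [zero_sub], by rw [zero_sub]⟩
      · rintro ⟨a, ha⟩
        rw [← ha]
        show (E.d 0, F.d 0) = 0
        simp
    ex₂ := by
      intro y
      constructor
      · intro hy
        have h0 : (E.p y.1, F.p y.2) = 0 := hinj (by
          show ψ _ = ψ 0
          rw [map_zero]; exact hy)
        obtain ⟨x, hx⟩ := (E.ex₂ _).mp (congrArg Prod.fst h0)
        obtain ⟨x', hx'⟩ := (F.ex₂ _).mp (congrArg Prod.snd h0)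
        refine ⟨QuotientAddGroup.mk ((0 : K), (x, x')), ?_⟩
        show (E.d x, F.d x') = y
        rw [hx, hx']
      · rintro ⟨x, rfl⟩
        refine QuotientAddGroup.induction_on x (fun v => ?_)
        show ψ (E.p (E.d v.2.1), F.p (F.d v.2.2)) = 0
        have h1 : E.p (E.d v.2.1) = 0 := (E.ex₂ _).mpr ⟨v.2.1, rfl⟩
        have h2 : F.p (F.d v.2.2) = 0 := (F.ex₂ _).mpr ⟨v.2.2, rfl⟩
        rw [h1, h2, Prod.mk_zero_zero, map_zero] }

/-- Functoriality of `prodExt` in the first argument. -/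
def prodExtHomLeft (ψ : CX × CY →+ C) (hψ : ∀ (g : G) (v : CX × CY), ψ (g • v) = g • ψ v)
    (hinj : Function.Injective ψ) (hsurj : Function.Surjective ψ)
    {E E' : TwoExt G K CX} (F : TwoExt G K CY) (h : TwoExtHom E E') :
    TwoExtHom (prodExt ψ hψ hinj hsurj E F) (prodExt ψ hψ hinj hsurj E' F) where
  f₁ := QuotientAddGroup.lift (prodW E F)
    ((QuotientAddGroup.mk' (prodW E' F)).comp
      { toFun := fun v : K × E.B₁ × F.B₁ => ((v.1 : K), (h.f₁ v.2.1, v.2.2))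
        map_zero' := by simp
        map_add' := fun a b => by simp [Prod.mk_add_mk] })
    (by
      rintro a ⟨⟨n, m⟩, rfl⟩
      show (QuotientAddGroup.mk ((n + m : K), (h.f₁ (-E.ι n), -F.ι m))
        : (K × E'.B₁ × F.B₁) ⧸ prodW E' F) = 0
      rw [map_neg, h.comm_ι, QuotientAddGroup.eq_zero_iff]
      exact ⟨(n, m), rfl⟩)
  f₂ := AddMonoidHom.prodMap h.f₂ (AddMonoidHom.id F.B₂)
  equiv₁ := fun g x => QuotientAddGroup.induction_on x (fun v => by
    show (QuotientAddGroup.mk ((g • v).1, (h.f₁ (g • v).2.1, (g • v).2.2))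
        : (K × E'.B₁ × F.B₁) ⧸ prodW E' F)
      = QuotientAddGroup.mk (g • (v.1, (h.f₁ v.2.1, v.2.2)))
    rw [Prod.smul_fst, Prod.smul_snd, Prod.smul_fst, Prod.smul_snd,
      h.equiv₁, Prod.smul_mk, Prod.smul_mk])
  equiv₂ := fun g x => by
    show (h.f₂ (g • x).1, (g • x).2) = g • (h.f₂ x.1, x.2)
    erw [Prod.smul_fst, Prod.smul_snd, h.equiv₂, Prod.smul_mk]
  comm_ι := fun n => by
    show (QuotientAddGroup.mk ((n : K), (h.f₁ 0, (0 : F.B₁)))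
        : (K × E'.B₁ × F.B₁) ⧸ prodW E' F) = QuotientAddGroup.mk ((n : K), (0, 0))
    rw [map_zero]
  comm_d := fun x => QuotientAddGroup.induction_on x (fun v => by
    show (h.f₂ (E.d v.2.1), F.d v.2.2) = (E'.d (h.f₁ v.2.1), F.d v.2.2)
    rw [h.comm_d])
  comm_p := fun y => by
    show ψ (E'.p (h.f₂ y.1), F.p y.2) = ψ (E.p y.1, F.p y.2)
    rw [h.comm_p]

/-- Functoriality of `prodExt` in the second argument. -/
def prodExtHomRight (ψ : CX × CY →+ C) (hψ : ∀ (g : G) (v : CX × CY), ψ (g • v) = g • ψ v)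
    (hinj : Function.Injective ψ) (hsurj : Function.Surjective ψ)
    (E : TwoExt G K CX) {F F' : TwoExt G K CY} (h : TwoExtHom F F') :
    TwoExtHom (prodExt ψ hψ hinj hsurj E F) (prodExt ψ hψ hinj hsurj E F') where
  f₁ := QuotientAddGroup.lift (prodW E F)
    ((QuotientAddGroup.mk' (prodW E F')).comp
      { toFun := fun v : K × E.B₁ × F.B₁ => ((v.1 : K), (v.2.1, h.f₁ v.2.2))
        map_zero' := by simp
        map_add' := fun a b => by simp [Prod.mk_add_mk] })
    (by
      rintro a ⟨⟨n, m⟩, rfl⟩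
      show (QuotientAddGroup.mk ((n + m : K), (-E.ι n, h.f₁ (-F.ι m)))
        : (K × E.B₁ × F'.B₁) ⧸ prodW E F') = 0
      rw [map_neg, h.comm_ι, QuotientAddGroup.eq_zero_iff]
      exact ⟨(n, m), rfl⟩)
  f₂ := AddMonoidHom.prodMap (AddMonoidHom.id E.B₂) h.f₂
  equiv₁ := fun g x => QuotientAddGroup.induction_on x (fun v => by
    show (QuotientAddGroup.mk ((g • v).1, ((g • v).2.1, h.f₁ (g • v).2.2))
        : (K × E.B₁ × F'.B₁) ⧸ prodW E F')
      = QuotientAddGroup.mk (g • (v.1, (v.2.1, h.f₁ v.2.2)))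
    rw [Prod.smul_fst, Prod.smul_snd, Prod.smul_fst, Prod.smul_snd,
      h.equiv₁, Prod.smul_mk, Prod.smul_mk])
  equiv₂ := fun g x => by
    show ((g • x).1, h.f₂ (g • x).2) = g • (x.1, h.f₂ x.2)
    erw [Prod.smul_fst, Prod.smul_snd, h.equiv₂, Prod.smul_mk]
  comm_ι := fun n => by
    show (QuotientAddGroup.mk ((n : K), ((0 : E.B₁), h.f₁ 0))
        : (K × E.B₁ × F'.B₁) ⧸ prodW E F') = QuotientAddGroup.mk ((n : K), (0, 0))
    rw [map_zero]
  comm_d := fun x => QuotientAddGroup.induction_on x (fun v => by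
    show (E.d v.2.1, h.f₂ (F.d v.2.2)) = (E.d v.2.1, F'.d (h.f₁ v.2.2))
    rw [h.comm_d])
  comm_p := fun y => by
    show ψ (E.p y.1, F'.p (h.f₂ y.2)) = ψ (E.p y.1, F.p y.2)
    rw [h.comm_p]

/-- The inverse of `ψ` as an `AddMonoidHom`. -/
noncomputable def ψinv (ψ : CX × CY →+ C) (hinj : Function.Injective ψ)
    (hsurj : Function.Surjective ψ) : C →+ CX × CY :=
  (AddEquiv.ofBijective ψ ⟨hinj, hsurj⟩).symm.toAddMonoidHom

theorem ψinv_apply (ψ : CX × CY →+ C) (hinj : Function.Injective ψ)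
    (hsurj : Function.Surjective ψ) (y : C) : ψ (ψinv ψ hinj hsurj y) = y :=
  (AddEquiv.ofBijective ψ ⟨hinj, hsurj⟩).apply_symm_apply y

theorem ψinv_equiv {G : Type} [Group G] [DistribMulAction G CX] [DistribMulAction G CY]
    [DistribMulAction G C] (ψ : CX × CY →+ C)
    (hψ : ∀ (g : G) (v : CX × CY), ψ (g • v) = g • ψ v)
    (hinj : Function.Injective ψ) (hsurj : Function.Surjective ψ) (g : G) (y : C) :
    ψinv ψ hinj hsurj (g • y) = g • ψinv ψ hinj hsurj y := by
  apply hinj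
  rw [ψinv_apply, hψ, ψinv_apply]

/-- The trivial extension maps to the product of two trivial extensions. -/
noncomputable def trivToProdHom (ψ : CX × CY →+ C)
    (hψ : ∀ (g : G) (v : CX × CY), ψ (g • v) = g • ψ v)
    (hinj : Function.Injective ψ) (hsurj : Function.Surjective ψ) :
    TwoExtHom (TwoExt.triv G K C)
      (prodExt ψ hψ hinj hsurj (TwoExt.triv G K CX) (TwoExt.triv G K CY)) where
  f₁ := (prodExt ψ hψ hinj hsurj (TwoExt.triv G K CX) (TwoExt.triv G K CY)).ι
  f₂ := ψinv ψ hinj hsurj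
  equiv₁ := fun g x =>
    (prodExt ψ hψ hinj hsurj (TwoExt.triv G K CX) (TwoExt.triv G K CY)).equiv_ι g x
  equiv₂ := fun g y => ψinv_equiv ψ hψ hinj hsurj g y
  comm_ι := fun _ => rfl
  comm_d := fun x => by
    show ψinv ψ hinj hsurj ((0 : K →+ C) x)
      = (prodExt ψ hψ hinj hsurj (TwoExt.triv G K CX) (TwoExt.triv G K CY)).d
        ((prodExt ψ hψ hinj hsurj (TwoExt.triv G K CX) (TwoExt.triv G K CY)).ι x)
    rw [((prodExt ψ hψ hinj hsurj (TwoExt.triv G K CX)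
      (TwoExt.triv G K CY)).ex₁ _).mpr ⟨x, rfl⟩]
    show ψinv ψ hinj hsurj 0 = 0
    rw [map_zero]
  comm_p := fun y => by
    show ψ (ψinv ψ hinj hsurj y) = y
    erw [ψinv_apply]

end Prod

section PullbackAux

variable {C M : Type} [AddCommGroup C] [DistribMulAction G C]
  [AddCommGroup M] [DistribMulAction G M]

/-- Functoriality of pullback of 2-extensions. -/
def TwoExtHom.pullbackHom {E F : TwoExt G K C} (h : TwoExtHom E F) (f : M →+ C)
    (hf : ∀ (g : G) (m : M), f (g • m) = g • f m) :
    TwoExtHom (E.pullback f hf) (F.pullback f hf) where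
  f₁ := h.f₁
  f₂ := { toFun := fun x => ⟨(h.f₂ (Subtype.val x).1, (Subtype.val x).2), by
            show F.p (h.f₂ (Subtype.val x).1) = f (Subtype.val x).2
            rw [h.comm_p]
            exact Subtype.prop x⟩
          map_zero' := by
            apply Subtype.ext
            show (h.f₂ ((0 : E.B₂ × M)).1, ((0 : E.B₂ × M)).2) = 0
            simp
          map_add' := fun x y => by
            apply Subtype.ext
            show (h.f₂ (Subtype.val x + Subtype.val y).1,
                (Subtype.val x + Subtype.val y).2) = _
            simp only [Prod.fst_add, Prod.snd_add, map_add]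
            rfl }
  equiv₁ := h.equiv₁
  equiv₂ := fun g x => by
    apply Subtype.ext
    show (h.f₂ (g • Subtype.val x).1, (g • Subtype.val x).2)
      = g • (h.f₂ (Subtype.val x).1, (Subtype.val x).2)
    rw [Prod.smul_fst, Prod.smul_snd, h.equiv₂, Prod.smul_mk]
  comm_ι := h.comm_ι
  comm_d := fun x => by
    apply Subtype.ext
    show (h.f₂ (E.d x), (0 : M)) = (F.d (h.f₁ x), (0 : M))
    erw [h.comm_d]
  comm_p := fun y => rfl

/-- The pullback of the trivial extension maps to the trivial extension. -/
def pullbackTrivHom (f : M →+ C) (hf : ∀ (g : G) (m : M), f (g • m) = g • f m) :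
    TwoExtHom ((TwoExt.triv G K C).pullback f hf) (TwoExt.triv G K M) where
  f₁ := AddMonoidHom.id K
  f₂ := (AddMonoidHom.snd C M).comp (pbCarrier (TwoExt.triv G K C) f).subtype
  equiv₁ := fun _ _ => rfl
  equiv₂ := fun g x => rfl
  comm_ι := fun _ => rfl
  comm_d := fun _ => rfl
  comm_p := fun _ => rfl

end PullbackAux

end AuxMachinery


/-- Let `k` be a field with separable closure `k̄` and `Γ = Gal(k̄/k)`, and let
`X`, `Y` be smooth geometrically integral `k`-varieties with `k̄[X]^× = k̄^× = k̄[Y]^×`.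
If the pullback `Γ`-morphism `ψ : Pic(X̄) ⊕ Pic(Ȳ) → Pic(X̄ × Ȳ)` is an isomorphism, then the
elementary obstruction `e(X ×_k Y)` vanishes if and only if both `e(X)` and `e(Y)` vanish.

Formalized in terms of the `Γ`-module data underlying the geometry:
* `K = k̄^×`, and `EX`, `EY`, `EXY` are the 2-extensions
  `1 → k̄^× → k̄(Z)^× → Div(Z̄) → Pic(Z̄) → 1` for `Z = X, Y, X × Y`, whose classes are the
  elementary obstructions `e(X)`, `e(Y)`, `e(X ×_k Y)`;
* `πF`, `πD`, `ψ` are the multiplication/pullback `Γ`-morphisms on functions, divisors and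
  Picard groups, forming with the multiplication `K ⊕ K → K` a morphism of 2-extensions from
  `EX ⊕ EY` to `EXY`;
* `ψ` is bijective.
The conclusion is that `e(X ×_k Y) = 0` (the class of `EXY` is the trivial class) if and only
if `e(X) = 0` and `e(Y) = 0`. -/
theorem elementary_obstruction_of_product_of_iso
    (Γ : Type) [Group Γ]
    (K PX PY PXY : Type) [AddCommGroup K] [DistribMulAction Γ K]
    [AddCommGroup PX] [DistribMulAction Γ PX]
    [AddCommGroup PY] [DistribMulAction Γ PY]
    [AddCommGroup PXY] [DistribMulAction Γ PXY]
    (EX : TwoExt Γ K PX) (EY : TwoExt Γ K PY) (EXY : TwoExt Γ K PXY)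
    (πF : EX.B₁ × EY.B₁ →+ EXY.B₁) (πD : EX.B₂ × EY.B₂ →+ EXY.B₂)
    (ψ : PX × PY →+ PXY)
    (hπF : ∀ (g : Γ) (v : EX.B₁ × EY.B₁), πF (g • v) = g • πF v)
    (hπD : ∀ (g : Γ) (v : EX.B₂ × EY.B₂), πD (g • v) = g • πD v)
    (hψ : ∀ (g : Γ) (v : PX × PY), ψ (g • v) = g • ψ v)
    (hsq₁ : ∀ a b : K, EXY.ι (a + b) = πF (EX.ι a, EY.ι b))
    (hsq₂ : ∀ (x : EX.B₁) (y : EY.B₁), EXY.d (πF (x, y)) = πD (EX.d x, EY.d y))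
    (hsq₃ : ∀ (u : EX.B₂) (v : EY.B₂), EXY.p (πD (u, v)) = ψ (EX.p u, EY.p v))
    (hbij : Function.Bijective ψ) :
    EXY.IsZeroClass ↔ (EX.IsZeroClass ∧ EY.IsZeroClass) := by
  obtain ⟨hinj, hsurj⟩ := hbij
  let fX : PX →+ PXY := ψ.comp (AddMonoidHom.inl PX PY)
  have hfX : ∀ (g : Γ) (m : PX), fX (g • m) = g • fX m := by
    intro g m
    show ψ (g • m, 0) = g • ψ (m, 0)
    rw [← hψ, show ((g • m, (0 : PY)) : PX × PY) = g • (m, 0) by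
      rw [Prod.smul_mk, smul_zero]]
  let fY : PY →+ PXY := ψ.comp (AddMonoidHom.inr PX PY)
  have hfY : ∀ (g : Γ) (m : PY), fY (g • m) = g • fY m := by
    intro g m
    show ψ (0, g • m) = g • ψ (0, m)
    rw [← hψ, show (((0 : PX), g • m) : PX × PY) = g • (0, m) by
      rw [Prod.smul_mk, smul_zero]]
  constructor
  · intro hz
    constructor
    · -- e(X) = 0
      have homX : TwoExtHom EX (EXY.pullback fX hfX) :=
      { f₁ := πF.comp (AddMonoidHom.inl EX.B₁ EY.B₁)
        f₂ := { toFun := fun u => ⟨(πD (u, 0), EX.p u), by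
                  show EXY.p (πD (u, 0)) = ψ (EX.p u, 0)
                  rw [hsq₃, map_zero]⟩
                map_zero' := by
                  apply Subtype.ext
                  show (πD ((0 : EX.B₂), (0 : EY.B₂)), EX.p 0) = 0
                  rw [Prod.mk_zero_zero, map_zero, map_zero]
                  rfl
                map_add' := fun u v => by
                  apply Subtype.ext
                  show (πD (u + v, 0), EX.p (u + v)) = _
                  rw [show ((u + v, (0 : EY.B₂)) : EX.B₂ × EY.B₂) = (u, 0) + (v, 0) by
                    rw [Prod.mk_add_mk, add_zero], map_add, map_add]
                  rfl }
        equiv₁ := fun g x => by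
          show πF (g • x, 0) = g • πF (x, 0)
          rw [show ((g • x, (0 : EY.B₁)) : EX.B₁ × EY.B₁) = g • (x, 0) by
            rw [Prod.smul_mk, smul_zero], hπF]
        equiv₂ := fun g u => by
          apply Subtype.ext
          show (πD (g • u, 0), EX.p (g • u)) = g • (πD (u, 0), EX.p u)
          rw [show ((g • u, (0 : EY.B₂)) : EX.B₂ × EY.B₂) = g • (u, 0) by
            rw [Prod.smul_mk, smul_zero], hπD, EX.equiv_p, Prod.smul_mk]
        comm_ι := fun a => by
          show πF (EX.ι a, 0) = EXY.ι a
          have h := hsq₁ a 0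
          rw [add_zero, map_zero] at h
          exact h.symm
        comm_d := fun x => by
          apply Subtype.ext
          show (πD (EX.d x, 0), EX.p (EX.d x)) = (EXY.d (πF (x, 0)), 0)
          rw [hsq₂, map_zero, (EX.ex₂ _).mpr ⟨x, rfl⟩]
        comm_p := fun u => rfl }
      have h1 : YEquiv EX (EXY.pullback fX hfX) := Relation.EqvGen.rel _ _ ⟨homX⟩
      have h2 : YEquiv (EXY.pullback fX hfX) ((TwoExt.triv Γ K PXY).pullback fX hfX) :=
        YEquiv.mapFn (fun E => E.pullback fX hfX)
          (fun a b hr => hr.elim fun h => ⟨h.pullbackHom fX hfX⟩) hz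
      have h3 : YEquiv ((TwoExt.triv Γ K PXY).pullback fX hfX) (TwoExt.triv Γ K PX) :=
        Relation.EqvGen.rel _ _ ⟨pullbackTrivHom fX hfX⟩
      exact Relation.EqvGen.trans _ _ _ h1 (Relation.EqvGen.trans _ _ _ h2 h3)
    · -- e(Y) = 0
      have homY : TwoExtHom EY (EXY.pullback fY hfY) :=
      { f₁ := πF.comp (AddMonoidHom.inr EX.B₁ EY.B₁)
        f₂ := { toFun := fun u => ⟨(πD (0, u), EY.p u), by
                  show EXY.p (πD (0, u)) = ψ (0, EY.p u)
                  rw [hsq₃, map_zero]⟩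
                map_zero' := by
                  apply Subtype.ext
                  show (πD ((0 : EX.B₂), (0 : EY.B₂)), EY.p 0) = 0
                  rw [Prod.mk_zero_zero, map_zero, map_zero]
                  rfl
                map_add' := fun u v => by
                  apply Subtype.ext
                  show (πD (0, u + v), EY.p (u + v)) = _
                  rw [show (((0 : EX.B₂), u + v) : EX.B₂ × EY.B₂) = (0, u) + (0, v) by
                    rw [Prod.mk_add_mk, add_zero], map_add, map_add]
                  rfl }
        equiv₁ := fun g x => by
          show πF (0, g • x) = g • πF (0, x)
          rw [show (((0 : EX.B₁), g • x) : EX.B₁ × EY.B₁) = g • (0, x) by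
            rw [Prod.smul_mk, smul_zero], hπF]
        equiv₂ := fun g u => by
          apply Subtype.ext
          show (πD (0, g • u), EY.p (g • u)) = g • (πD (0, u), EY.p u)
          rw [show (((0 : EX.B₂), g • u) : EX.B₂ × EY.B₂) = g • (0, u) by
            rw [Prod.smul_mk, smul_zero], hπD, EY.equiv_p, Prod.smul_mk]
        comm_ι := fun a => by
          show πF (0, EY.ι a) = EXY.ι a
          have h := hsq₁ 0 a
          rw [zero_add, map_zero] at h
          exact h.symm
        comm_d := fun x => by
          apply Subtype.ext
          show (πD (0, EY.d x), EY.p (EY.d x)) = (EXY.d (πF (0, x)), 0)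
          rw [hsq₂, map_zero, (EY.ex₂ _).mpr ⟨x, rfl⟩]
        comm_p := fun u => rfl }
      have h1 : YEquiv EY (EXY.pullback fY hfY) := Relation.EqvGen.rel _ _ ⟨homY⟩
      have h2 : YEquiv (EXY.pullback fY hfY) ((TwoExt.triv Γ K PXY).pullback fY hfY) :=
        YEquiv.mapFn (fun E => E.pullback fY hfY)
          (fun a b hr => hr.elim fun h => ⟨h.pullbackHom fY hfY⟩) hz
      have h3 : YEquiv ((TwoExt.triv Γ K PXY).pullback fY hfY) (TwoExt.triv Γ K PY) :=
        Relation.EqvGen.rel _ _ ⟨pullbackTrivHom fY hfY⟩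
      exact Relation.EqvGen.trans _ _ _ h1 (Relation.EqvGen.trans _ _ _ h2 h3)
  · rintro ⟨hx, hy⟩
    have prodHom : TwoExtHom (prodExt ψ hψ hinj hsurj EX EY) EXY :=
    { f₁ := QuotientAddGroup.lift (prodW EX EY)
        { toFun := fun v : K × EX.B₁ × EY.B₁ => EXY.ι v.1 + πF v.2
          map_zero' := by simp
          map_add' := fun a b => by
            show EXY.ι (a.1 + b.1) + πF (a.2 + b.2) = _
            rw [map_add, map_add]
            abel }
        (by
          rintro a ⟨⟨n, m⟩, rfl⟩
          show EXY.ι (n + m) + πF (-EX.ι n, -EY.ι m) = 0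
          rw [show ((-EX.ι n, -EY.ι m) : EX.B₁ × EY.B₁) = -(EX.ι n, EY.ι m) from rfl,
            map_neg, ← hsq₁]
          abel)
      f₂ := πD
      equiv₁ := fun g x => QuotientAddGroup.induction_on x fun v => by
        show EXY.ι (g • v).1 + πF (g • v).2 = g • (EXY.ι v.1 + πF v.2)
        rw [Prod.smul_fst, Prod.smul_snd, EXY.equiv_ι, hπF, smul_add]
      equiv₂ := hπD
      comm_ι := fun a => by
        show EXY.ι a + πF ((0 : EX.B₁), (0 : EY.B₁)) = EXY.ι a
        rw [Prod.mk_zero_zero, map_zero, add_zero]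
      comm_d := fun x => QuotientAddGroup.induction_on x fun v => by
        show πD (EX.d v.2.1, EY.d v.2.2) = EXY.d (EXY.ι v.1 + πF v.2)
        rw [map_add, (EXY.ex₁ _).mpr ⟨v.1, rfl⟩, zero_add]
        exact (hsq₂ v.2.1 v.2.2).symm
      comm_p := fun u => hsq₃ u.1 u.2 }
    have h0 : YEquiv EXY (prodExt ψ hψ hinj hsurj EX EY) :=
      Relation.EqvGen.symm _ _ (Relation.EqvGen.rel _ _ ⟨prodHom⟩)
    have h1 : YEquiv (prodExt ψ hψ hinj hsurj EX EY)
        (prodExt ψ hψ hinj hsurj (TwoExt.triv Γ K PX) EY) :=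
      YEquiv.mapFn (fun E => prodExt ψ hψ hinj hsurj E EY)
        (fun a b hr => hr.elim fun h => ⟨prodExtHomLeft ψ hψ hinj hsurj EY h⟩) hx
    have h2 : YEquiv (prodExt ψ hψ hinj hsurj (TwoExt.triv Γ K PX) EY)
        (prodExt ψ hψ hinj hsurj (TwoExt.triv Γ K PX) (TwoExt.triv Γ K PY)) :=
      YEquiv.mapFn (fun F => prodExt ψ hψ hinj hsurj (TwoExt.triv Γ K PX) F)
        (fun a b hr => hr.elim fun h =>
          ⟨prodExtHomRight ψ hψ hinj hsurj (TwoExt.triv Γ K PX) h⟩) hy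
    have h3 : YEquiv (prodExt ψ hψ hinj hsurj (TwoExt.triv Γ K PX) (TwoExt.triv Γ K PY))
        (TwoExt.triv Γ K PXY) :=
      Relation.EqvGen.symm _ _
        (Relation.EqvGen.rel _ _ ⟨trivToProdHom ψ hψ hinj hsurj⟩)
    exact Relation.EqvGen.trans _ _ _ h0 (Relation.EqvGen.trans _ _ _ h1
      (Relation.EqvGen.trans _ _ _ h2 h3))
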